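/- Let V₁(x,y) = max_{u' ∈ Δ^m} min_{u ∈ Δ^m} { (u'-u)ᵀy + τν(u') - τν(u) + (1/(2μ))‖x - Bu‖₂² } with τ, μ > 0 and B ∈ ℝ^{n×m}. Then for all x ∈ ℝ^n, y ∈ ℝ^m: ‖σ_τ(y) - p(μ,x,y)‖₂ ≤ √(2/τ)·V₁(x,y)^{1/2}, where p(μ,x,y) is the minimizer in the definition of V₁. -/

import Mathlib

noncomputable def e2 {n : ℕ} (v : Fin n → ℝ) : ℝ := Real.sqrt (∑ i, (v i) ^ 2)

noncomputable def entropy {n : ℕ} (u : Fin n → ℝ) : ℝ :=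
  -∑ a, u a * Real.log (u a)

noncomputable def softmax {n : ℕ} (τ : ℝ) (x : Fin n → ℝ) : Fin n → ℝ :=
  fun a => Real.exp (x a / τ) / ∑ b, Real.exp (x b / τ)

/-- `V₁(x,y) = max_{u'∈Δ^m}{u'ᵀy + τν(u')} + min_{u∈Δ^m}{-uᵀy - τν(u) + (1/(2μ))‖x-Bu‖₂²}`. -/
noncomputable def V1 {n m : ℕ} (τ μ : ℝ) (B : Matrix (Fin n) (Fin m) ℝ)
    (x : Fin n → ℝ) (y : Fin m → ℝ) : ℝ :=
  sSup ((fun u' : Fin m → ℝ => ∑ a, u' a * y a + τ * entropy u') '' stdSimplex ℝ (Fin m)) +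
  sInf ((fun u : Fin m → ℝ =>
      -(∑ a, u a * y a) - τ * entropy u
        + (1 / (2 * μ)) * (e2 (fun i => x i - B.mulVec u i)) ^ 2) '' stdSimplex ℝ (Fin m))

/-- Derivative of the auxiliary scalar function. -/
lemma aux_hasDerivAt_f (s u : ℝ) (hu : u ≠ 0) :
    HasDerivAt (fun v => v * Real.log v - v * Real.log s - v + s - (v - s)^2/2)
      (Real.log u - Real.log s - u + s) u := by
  have h1 := Real.hasDerivAt_mul_log hu
  have h2 : HasDerivAt (fun v : ℝ => v * Real.log s) (Real.log s) u := by
    simpa using (hasDerivAt_id u).mul_const (Real.log s)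
  have h3 : HasDerivAt (fun v : ℝ => (v - s)^2 / 2) ((2 * (u - s)) / 2) u := by
    have := ((hasDerivAt_id u).sub_const s).pow 2
    simpa using this.div_const 2
  have := (((h1.sub h2).sub (hasDerivAt_id u)).add_const s).sub h3
  exact this.congr_deriv (by ring)

/-- `log u - u` is strictly increasing on `(0,1]`. -/
lemma aux_g_strictMono : StrictMonoOn (fun u => Real.log u - u) (Set.Ioc (0:ℝ) 1) := by
  apply strictMonoOn_of_deriv_pos (convex_Ioc 0 1)
  · exact (Real.continuousOn_log.mono (by intro x hx; simp; exact ne_of_gt hx.1)).sub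
      continuousOn_id
  · intro x hx
    rw [interior_Ioc] at hx
    have hd : HasDerivAt (fun u => Real.log u - u) (x⁻¹ - 1) x :=
      (Real.hasDerivAt_log hx.1.ne').sub (hasDerivAt_id x)
    rw [hd.deriv]
    have : 1 < x⁻¹ := (one_lt_inv₀ hx.1).mpr hx.2
    linarith

/-- Key scalar inequality: for `s ∈ (0,1]`, `t ∈ [0,1]`,
`(t-s)²/2 ≤ t log t - t log s - t + s`. -/
lemma aux_key (s t : ℝ) (hs0 : 0 < s) (hs1 : s ≤ 1) (ht0 : 0 ≤ t) (ht1 : t ≤ 1) :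
    (t - s)^2 / 2 ≤ t * Real.log t - t * Real.log s - t + s := by
  rcases eq_or_lt_of_le ht0 with h0 | h0
  · rw [← h0]; simp; nlinarith
  set f : ℝ → ℝ := fun v => v * Real.log v - v * Real.log s - v + s - (v - s)^2/2 with hf
  have hcont : Continuous f := by
    fun_prop
  have hfs : f s = 0 := by simp [hf]
  suffices h : 0 ≤ f t by simp only [hf] at h; linarith
  rcases lt_trichotomy t s with hts | hts | hts
  · have hanti : StrictAntiOn f (Set.Icc t s) := by
      apply strictAntiOn_of_deriv_neg (convex_Icc t s) hcont.continuousOn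
      intro x hx
      rw [interior_Icc] at hx
      rw [(aux_hasDerivAt_f s x (by linarith [hx.1] : x ≠ 0)).deriv]
      have := aux_g_strictMono (Set.mem_Ioc.mpr ⟨by linarith [hx.1], by linarith [hx.2]⟩)
        (Set.mem_Ioc.mpr ⟨hs0, hs1⟩) hx.2
      simp only at this
      linarith
    have := hanti (Set.mem_Icc.mpr ⟨le_refl t, hts.le⟩) (Set.mem_Icc.mpr ⟨hts.le, le_refl s⟩) hts
    linarith
  · rw [hts]; linarith
  · have hmono : StrictMonoOn f (Set.Icc s t) := by
      apply strictMonoOn_of_deriv_pos (convex_Icc s t) hcont.continuousOn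
      intro x hx
      rw [interior_Icc] at hx
      rw [(aux_hasDerivAt_f s x (by linarith [hx.1] : x ≠ 0)).deriv]
      have := aux_g_strictMono (Set.mem_Ioc.mpr ⟨hs0, hs1⟩)
        (Set.mem_Ioc.mpr ⟨by linarith [hx.1], by linarith [hx.2]⟩) hx.1
      simp only at this
      linarith
    have := hmono (Set.mem_Icc.mpr ⟨le_refl s, hts.le⟩) (Set.mem_Icc.mpr ⟨hts.le, le_refl t⟩) hts
    linarith

/-- Strong concavity of `u ↦ uᵀy + τν(u)` around its maximizer, the softmax. -/
lemma aux_star {m : ℕ} (τ : ℝ) (hτ : 0 < τ) (y u : Fin m → ℝ)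
    (hu : u ∈ stdSimplex ℝ (Fin m)) :
    τ/2 * ∑ a, (u a - softmax τ y a)^2 + (∑ a, u a * y a + τ * entropy u)
      ≤ ∑ a, softmax τ y a * y a + τ * entropy (softmax τ y) := by
  obtain ⟨hu0, hu1⟩ := hu
  have hm : 0 < m := by
    rcases Nat.eq_zero_or_pos m with h | h
    · subst h; simp at hu1
    · exact h
  set Z := ∑ b, Real.exp (y b / τ) with hZ
  have hZpos : 0 < Z := Finset.sum_pos (fun b _ => Real.exp_pos _)
    ⟨⟨0, hm⟩, Finset.mem_univ _⟩
  set σ := softmax τ y with hσ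
  have hσdef : ∀ a, σ a = Real.exp (y a / τ) / Z := fun a => rfl
  have hσpos : ∀ a, 0 < σ a := fun a => div_pos (Real.exp_pos _) hZpos
  have hσle : ∀ a, σ a ≤ 1 := fun a => by
    rw [hσdef, div_le_one hZpos]
    rw [hZ]
    exact Finset.single_le_sum (f := fun b => Real.exp (y b / τ))
      (fun b _ => (Real.exp_pos _).le) (Finset.mem_univ a)
  have hσsum : ∑ a, σ a = 1 := by
    simp only [hσdef]
    rw [← Finset.sum_div, div_self hZpos.ne']
  have hlog : ∀ a, Real.log (σ a) = y a / τ - Real.log Z := fun a => by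
    rw [hσdef, Real.log_div (Real.exp_ne_zero _) hZpos.ne', Real.log_exp]
  have hule : ∀ a, u a ≤ 1 := fun a => by
    calc u a ≤ ∑ b, u b := Finset.single_le_sum (fun b _ => hu0 b) (Finset.mem_univ a)
    _ = 1 := hu1
  have hdot : ∀ v : Fin m → ℝ, (∑ a, v a = 1) →
      ∑ a, v a * Real.log (σ a) = (∑ a, v a * y a)/τ - Real.log Z := by
    intro v hv
    simp only [hlog, mul_sub]
    rw [Finset.sum_sub_distrib, ← Finset.sum_mul, hv, one_mul]
    congr 1
    rw [Finset.sum_div]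
    exact Finset.sum_congr rfl fun a _ => (mul_div_assoc _ _ _).symm
  have hsum := Finset.sum_le_sum (fun a (_ : a ∈ Finset.univ) =>
    aux_key (σ a) (u a) (hσpos a) (hσle a) (hu0 a) (hule a))
  rw [← Finset.sum_div] at hsum
  have hexp : ∑ a, (u a * Real.log (u a) - u a * Real.log (σ a) - u a + σ a)
      = (∑ a, u a * Real.log (u a)) - ((∑ a, u a * y a)/τ - Real.log Z) - 1 + 1 := by
    rw [Finset.sum_add_distrib, Finset.sum_sub_distrib, Finset.sum_sub_distrib,
      hσsum, hu1, hdot u hu1]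
  rw [hexp] at hsum
  have hEσ : entropy σ = -((∑ a, σ a * y a)/τ - Real.log Z) := by
    rw [entropy, hdot σ hσsum]
  have hEu : entropy u = -(∑ a, u a * Real.log (u a)) := rfl
  rw [hEσ, hEu]
  have h2 : τ * ((∑ a, (u a - σ a)^2) / 2) ≤ τ * ((∑ a, u a * Real.log (u a))
      - ((∑ a, u a * y a)/τ - Real.log Z) - 1 + 1) :=
    mul_le_mul_of_nonneg_left hsum hτ.le
  have hτ' : τ ≠ 0 := hτ.ne'
  field_simp at h2 ⊢
  nlinarith [h2]

/-- `‖σ_τ(y) - p(μ,x,y)‖₂ ≤ √(2/τ)·V₁(x,y)^{1/2}`, where `p(μ,x,y)` is the minimizer in the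
definition of `V₁`. -/
theorem softmax_sub_p_le_sqrt_V1 {n m : ℕ} (τ μ : ℝ) (hτ : 0 < τ) (hμ : 0 < μ)
    (B : Matrix (Fin n) (Fin m) ℝ) (x : Fin n → ℝ) (y : Fin m → ℝ) (p : Fin m → ℝ)
    (hp : p ∈ stdSimplex ℝ (Fin m))
    (hmin : IsMinOn (fun u : Fin m → ℝ =>
        -(∑ a, u a * y a) - τ * entropy u
          + (1 / (2 * μ)) * (e2 (fun i => x i - B.mulVec u i)) ^ 2)
      (stdSimplex ℝ (Fin m)) p) :
    e2 (fun a => softmax τ y a - p a) ≤ Real.sqrt (2 / τ) * Real.sqrt (V1 τ μ B x y) := by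
  have hm : 0 < m := by
    rcases Nat.eq_zero_or_pos m with h | h
    · exfalso; subst h; exact absurd hp.2 (by simp)
    · exact h
  have hZpos : 0 < ∑ b, Real.exp (y b / τ) :=
    Finset.sum_pos (fun b _ => Real.exp_pos _) ⟨⟨0, hm⟩, Finset.mem_univ _⟩
  have hσmem : softmax τ y ∈ stdSimplex ℝ (Fin m) := by
    constructor
    · exact fun a => (div_pos (Real.exp_pos _) hZpos).le
    · simp only [softmax]
      rw [← Finset.sum_div, div_self hZpos.ne']
  set σ := softmax τ y with hσdef
  have hSup : ∑ a, σ a * y a + τ * entropy σ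
      ≤ sSup ((fun u' : Fin m → ℝ => ∑ a, u' a * y a + τ * entropy u')
          '' stdSimplex ℝ (Fin m)) := by
    apply le_csSup
    · refine ⟨∑ a, σ a * y a + τ * entropy σ, ?_⟩
      rintro _ ⟨u, hu, rfl⟩
      have hstar := aux_star τ hτ y u hu
      rw [← hσdef] at hstar
      have hs : 0 ≤ τ/2 * ∑ a, (u a - σ a)^2 := by positivity
      simp only
      linarith
    · exact ⟨σ, hσmem, rfl⟩
  have hInf : -(∑ a, p a * y a) - τ * entropy p
        + (1 / (2 * μ)) * (e2 (fun i => x i - B.mulVec p i)) ^ 2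
      ≤ sInf ((fun u : Fin m → ℝ =>
          -(∑ a, u a * y a) - τ * entropy u
            + (1 / (2 * μ)) * (e2 (fun i => x i - B.mulVec u i)) ^ 2)
          '' stdSimplex ℝ (Fin m)) := by
    refine le_csInf ⟨_, ⟨p, hp, rfl⟩⟩ ?_
    rintro _ ⟨u, hu, rfl⟩
    exact hmin hu
  have hstar := aux_star τ hτ y p hp
  rw [← hσdef] at hstar
  have h0 : 0 ≤ (1 / (2 * μ)) * (e2 (fun i => x i - B.mulVec p i)) ^ 2 := by positivity
  have hV : τ/2 * ∑ a, (p a - σ a)^2 ≤ V1 τ μ B x y := by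
    rw [V1]
    linarith
  have hs2 : ∑ a, (σ a - p a)^2 = ∑ a, (p a - σ a)^2 :=
    Finset.sum_congr rfl fun a _ => by ring
  simp only [e2]
  rw [← Real.sqrt_mul (by positivity : (0:ℝ) ≤ 2/τ)]
  apply Real.sqrt_le_sqrt
  rw [hs2]
  set S := ∑ a, (p a - σ a)^2 with hS
  have h3 : (2/τ) * (τ/2 * S) ≤ (2/τ) * V1 τ μ B x y :=
    mul_le_mul_of_nonneg_left hV (by positivity)
  have h4 : (2/τ) * (τ/2 * S) = S := by field_simp
  linarith
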